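/- arXiv:2602.08118 — 3 statements merged into one kernel-verified Lean document; each statement's English description precedes it below -/
import Mathlib

section
/- Under the semi-discrete assumptions (μ = Σ a_i δ_{x_i}, ν = Σ b_j δ_{y_j} discrete probability measures with positive weights, γ absolutely continuous on ℝ^d × ℝ^d), the superlevel set Z_K = {(α,β) ∈ ℝ^{n+m} : U(α,β) ≥ K} satisfies: Z_K ⊆ {(α,β) : -R ≤ min_i α_i + min_j β_j and max_i α_i + max_j β_j ≤ R} for some finite R depending on K, μ, ν, γ. Consequently, the image of Z_K in the quotient space ℝ^{n+m}/∼_⊕ is compact, where (α,β) ∼_⊕ (α',β') iff α_i + β_j = α'_i + β'_j for all i,j. -/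
open MeasureTheory
open scoped ENNReal

noncomputable section

/-- `f(x,α) = max_{1≤i≤n} (⟨x,x_i⟩ + α_i)`. -/
def fmax {d n : ℕ} (xs : Fin n → EuclideanSpace ℝ (Fin d))
    (x : EuclideanSpace ℝ (Fin d)) (α : Fin n → ℝ) : ℝ :=
  ⨆ i : Fin n, ((inner ℝ x (xs i) : ℝ) + α i)

/-- The finite-dimensional dual objective
`U(α,β) = Σ_i a_i(α_i + ½‖x_i‖²) + Σ_j b_j(β_j + ½‖y_j‖²)
          - ∫ exp(f(x,α)+g(y,β) - ½‖x‖² - ½‖y‖²) dγ + 1`. -/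
def Udual {d n m : ℕ} (xs : Fin n → EuclideanSpace ℝ (Fin d))
    (ys : Fin m → EuclideanSpace ℝ (Fin d)) (a : Fin n → ℝ) (b : Fin m → ℝ)
    (γ : Measure (EuclideanSpace ℝ (Fin d) × EuclideanSpace ℝ (Fin d)))
    (α : Fin n → ℝ) (β : Fin m → ℝ) : ℝ :=
  ∑ i, a i * (α i + ‖xs i‖ ^ 2 / 2) + ∑ j, b j * (β j + ‖ys j‖ ^ 2 / 2)
    - ∫ p, Real.exp (fmax xs p.1 α + fmax ys p.2 β - ‖p.1‖ ^ 2 / 2 - ‖p.2‖ ^ 2 / 2) ∂γ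
    + 1

section Aux


lemma fin_le_ciSup {k : ℕ} (hk : 0 < k) (f : Fin k → ℝ) (i : Fin k) : f i ≤ ⨆ i, f i := by
  haveI : Nonempty (Fin k) := Fin.pos_iff_nonempty.mp hk
  exact le_ciSup (Set.finite_range f).bddAbove i

lemma fin_ciInf_le {k : ℕ} (hk : 0 < k) (f : Fin k → ℝ) (i : Fin k) : (⨅ i, f i) ≤ f i := by
  haveI : Nonempty (Fin k) := Fin.pos_iff_nonempty.mp hk
  exact ciInf_le (Set.finite_range f).bddBelow i

lemma aux_ciSup_sub {n : ℕ} (hn : 0 < n) (f : Fin n → ℝ) (r : ℝ) :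
    ⨆ i, (f i - r) = (⨆ i, f i) - r := by
  haveI : Nonempty (Fin n) := Fin.pos_iff_nonempty.mp hn
  rw [← Finset.sup'_univ_eq_ciSup, ← Finset.sup'_univ_eq_ciSup]
  exact (Finset.comp_sup'_eq_sup'_comp Finset.univ_nonempty (fun t => t - r)
    (fun x y => by simpa using (max_sub_sub_right x y r).symm)).symm

lemma aux_ciSup_add {n : ℕ} (hn : 0 < n) (f : Fin n → ℝ) (r : ℝ) :
    ⨆ i, (f i + r) = (⨆ i, f i) + r := by
  haveI : Nonempty (Fin n) := Fin.pos_iff_nonempty.mp hn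
  rw [← Finset.sup'_univ_eq_ciSup, ← Finset.sup'_univ_eq_ciSup]
  exact (Finset.comp_sup'_eq_sup'_comp Finset.univ_nonempty (fun t => t + r)
    (fun x y => by simpa using (max_add_add_right x y r).symm)).symm

lemma le_fmax {d n : ℕ} (hn : 0 < n) (xs : Fin n → EuclideanSpace ℝ (Fin d))
    (α : Fin n → ℝ) (x : EuclideanSpace ℝ (Fin d)) (i : Fin n) :
    (inner ℝ x (xs i) : ℝ) + α i ≤ fmax xs x α := by
  exact fin_le_ciSup hn (fun i => (inner ℝ x (xs i) : ℝ) + α i) i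

lemma fmax_le {d n : ℕ} (hn : 0 < n) (xs : Fin n → EuclideanSpace ℝ (Fin d))
    (α : Fin n → ℝ) (x : EuclideanSpace ℝ (Fin d)) :
    fmax xs x α ≤ ‖x‖ * (⨆ i, ‖xs i‖) + ⨆ i, α i := by
  haveI : Nonempty (Fin n) := Fin.pos_iff_nonempty.mp hn
  unfold fmax
  refine ciSup_le fun i => ?_
  have h1 : (inner ℝ x (xs i) : ℝ) ≤ ‖x‖ * ‖xs i‖ := real_inner_le_norm x (xs i)
  have h2 : ‖xs i‖ ≤ ⨆ i, ‖xs i‖ := fin_le_ciSup hn (fun i => ‖xs i‖) i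
  have h3 : α i ≤ ⨆ i, α i := fin_le_ciSup hn α i
  have h4 := mul_le_mul_of_nonneg_left h2 (norm_nonneg x)
  linarith

lemma fmax_ge {d n : ℕ} (hn : 0 < n) (xs : Fin n → EuclideanSpace ℝ (Fin d))
    (α : Fin n → ℝ) (x : EuclideanSpace ℝ (Fin d)) :
    (⨆ i, α i) - ‖x‖ * (⨆ i, ‖xs i‖) ≤ fmax xs x α := by
  haveI : Nonempty (Fin n) := Fin.pos_iff_nonempty.mp hn
  obtain ⟨i, hi⟩ := exists_eq_ciSup_of_finite (f := α)
  have h1 := le_fmax hn xs α x i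
  have h2 : |(inner ℝ x (xs i) : ℝ)| ≤ ‖x‖ * ‖xs i‖ := abs_real_inner_le_norm x (xs i)
  have h3 : ‖xs i‖ ≤ ⨆ i, ‖xs i‖ := fin_le_ciSup hn (fun i => ‖xs i‖) i
  have h4 := mul_le_mul_of_nonneg_left h3 (norm_nonneg x)
  have h5 := neg_abs_le ((inner ℝ x (xs i) : ℝ))
  linarith [hi ▸ h1]

lemma fmax_cont {d n : ℕ} (hn : 0 < n) (xs : Fin n → EuclideanSpace ℝ (Fin d)) :
    Continuous (fun p : EuclideanSpace ℝ (Fin d) × (Fin n → ℝ) => fmax xs p.1 p.2) := by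
  haveI : Nonempty (Fin n) := Fin.pos_iff_nonempty.mp hn
  have h : ∀ p : EuclideanSpace ℝ (Fin d) × (Fin n → ℝ),
      fmax xs p.1 p.2 = Finset.univ.sup' Finset.univ_nonempty
        (fun i => (inner ℝ p.1 (xs i) : ℝ) + p.2 i) := fun p =>
    (Finset.sup'_univ_eq_ciSup _).symm
  simp only [h]
  exact Continuous.finset_sup'_apply Finset.univ_nonempty fun i _ =>
    (continuous_fst.inner continuous_const).add ((continuous_apply i).comp continuous_snd)

lemma integrand_cont {d n m : ℕ} (hn : 0 < n) (hm : 0 < m)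
    (xs : Fin n → EuclideanSpace ℝ (Fin d)) (ys : Fin m → EuclideanSpace ℝ (Fin d))
    (α : Fin n → ℝ) (β : Fin m → ℝ) :
    Continuous (fun p : EuclideanSpace ℝ (Fin d) × EuclideanSpace ℝ (Fin d) =>
      Real.exp (fmax xs p.1 α + fmax ys p.2 β - ‖p.1‖ ^ 2 / 2 - ‖p.2‖ ^ 2 / 2)) := by
  apply Real.continuous_exp.comp
  exact ((((fmax_cont hn xs).comp (continuous_fst.prodMk continuous_const)).add
    ((fmax_cont hm ys).comp (continuous_snd.prodMk continuous_const))).sub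
    ((continuous_fst.norm.pow 2).div_const 2)).sub ((continuous_snd.norm.pow 2).div_const 2)

lemma integrand_le {d n m : ℕ} (hn : 0 < n) (hm : 0 < m)
    (xs : Fin n → EuclideanSpace ℝ (Fin d)) (ys : Fin m → EuclideanSpace ℝ (Fin d))
    (α : Fin n → ℝ) (β : Fin m → ℝ)
    (p : EuclideanSpace ℝ (Fin d) × EuclideanSpace ℝ (Fin d)) :
    Real.exp (fmax xs p.1 α + fmax ys p.2 β - ‖p.1‖ ^ 2 / 2 - ‖p.2‖ ^ 2 / 2) ≤
      Real.exp ((⨆ i, ‖xs i‖) ^ 2 / 2 + (⨆ j, ‖ys j‖) ^ 2 / 2 + (⨆ i, α i) + (⨆ j, β j)) := by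
  apply Real.exp_le_exp.mpr
  have h1 := fmax_le hn xs α p.1
  have h2 := fmax_le hm ys β p.2
  nlinarith [sq_nonneg (‖p.1‖ - ⨆ i, ‖xs i‖), sq_nonneg (‖p.2‖ - ⨆ j, ‖ys j‖)]

lemma integrand_integrable {d n m : ℕ} (hn : 0 < n) (hm : 0 < m)
    (xs : Fin n → EuclideanSpace ℝ (Fin d)) (ys : Fin m → EuclideanSpace ℝ (Fin d))
    (γ : Measure (EuclideanSpace ℝ (Fin d) × EuclideanSpace ℝ (Fin d)))
    [IsFiniteMeasure γ] (α : Fin n → ℝ) (β : Fin m → ℝ) :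
    Integrable (fun p => Real.exp
      (fmax xs p.1 α + fmax ys p.2 β - ‖p.1‖ ^ 2 / 2 - ‖p.2‖ ^ 2 / 2)) γ := by
  refine Integrable.mono' (integrable_const (Real.exp ((⨆ i, ‖xs i‖) ^ 2 / 2
      + (⨆ j, ‖ys j‖) ^ 2 / 2 + (⨆ i, α i) + (⨆ j, β j))))
    (integrand_cont hn hm xs ys α β).aestronglyMeasurable (ae_of_all _ fun p => ?_)
  rw [Real.norm_eq_abs, Real.abs_exp]
  exact integrand_le hn hm xs ys α β p

lemma Udual_shift {d n m : ℕ} (hn : 0 < n) (hm : 0 < m)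
    (xs : Fin n → EuclideanSpace ℝ (Fin d)) (ys : Fin m → EuclideanSpace ℝ (Fin d))
    (a : Fin n → ℝ) (b : Fin m → ℝ) (hsa : ∑ i, a i = 1) (hsb : ∑ j, b j = 1)
    (γ : Measure (EuclideanSpace ℝ (Fin d) × EuclideanSpace ℝ (Fin d)))
    (α : Fin n → ℝ) (β : Fin m → ℝ) (r : ℝ) :
    Udual xs ys a b γ (fun i => α i - r) (fun j => β j + r) = Udual xs ys a b γ α β := by
  have hf : ∀ x, fmax xs x (fun i => α i - r) = fmax xs x α - r := by
    intro x
    unfold fmax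
    rw [← aux_ciSup_sub hn (fun i => (inner ℝ x (xs i) : ℝ) + α i) r]
    congr 1; funext i; ring
  have hg : ∀ y, fmax ys y (fun j => β j + r) = fmax ys y β + r := by
    intro y
    unfold fmax
    rw [← aux_ciSup_add hm (fun j => (inner ℝ y (ys j) : ℝ) + β j) r]
    congr 1; funext j; ring
  unfold Udual
  have hint : (fun p : EuclideanSpace ℝ (Fin d) × EuclideanSpace ℝ (Fin d) =>
      Real.exp (fmax xs p.1 (fun i => α i - r) + fmax ys p.2 (fun j => β j + r)
        - ‖p.1‖ ^ 2 / 2 - ‖p.2‖ ^ 2 / 2)) = (fun p =>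
      Real.exp (fmax xs p.1 α + fmax ys p.2 β - ‖p.1‖ ^ 2 / 2 - ‖p.2‖ ^ 2 / 2)) := by
    funext p
    rw [hf, hg]
    ring_nf
  rw [hint]
  have h1 : ∑ i, a i * ((α i - r) + ‖xs i‖ ^ 2 / 2)
      = ∑ i, a i * (α i + ‖xs i‖ ^ 2 / 2) - r := by
    have h : ∀ i ∈ Finset.univ, a i * ((α i - r) + ‖xs i‖ ^ 2 / 2)
        = a i * (α i + ‖xs i‖ ^ 2 / 2) - a i * r := fun i _ => by ring
    rw [Finset.sum_congr rfl h, Finset.sum_sub_distrib, ← Finset.sum_mul, hsa, one_mul]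
  have h2 : ∑ j, b j * ((β j + r) + ‖ys j‖ ^ 2 / 2)
      = ∑ j, b j * (β j + ‖ys j‖ ^ 2 / 2) + r := by
    have h : ∀ j ∈ Finset.univ, b j * ((β j + r) + ‖ys j‖ ^ 2 / 2)
        = b j * (β j + ‖ys j‖ ^ 2 / 2) + b j * r := fun j _ => by ring
    rw [Finset.sum_congr rfl h, Finset.sum_add_distrib, ← Finset.sum_mul, hsb, one_mul]
  rw [h1, h2]
  ring

lemma weighted_bounds {n : ℕ} (hn : 0 < n) (a : Fin n → ℝ) (ha : ∀ i, 0 < a i)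
    (hsa : ∑ i, a i = 1) (α : Fin n → ℝ) (ε : ℝ) (hε : ∀ i, ε ≤ a i) :
    ∑ i, a i * α i ≤ ε * (⨅ i, α i) + (1 - ε) * (⨆ i, α i) := by
  haveI : Nonempty (Fin n) := Fin.pos_iff_nonempty.mp hn
  obtain ⟨i₀, hi₀⟩ := exists_eq_ciInf_of_finite (f := α)
  have hsup : ∀ i, α i ≤ ⨆ i, α i := fun i => fin_le_ciSup hn α i
  have hinf_le : (⨅ i, α i) ≤ ⨆ i, α i := hi₀ ▸ hsup i₀
  have h1 : ∑ i ∈ Finset.univ.erase i₀, a i * α i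
      ≤ ∑ i ∈ Finset.univ.erase i₀, a i * (⨆ i, α i) :=
    Finset.sum_le_sum fun i _ => mul_le_mul_of_nonneg_left (hsup i) (ha i).le
  have h2 : a i₀ + ∑ i ∈ Finset.univ.erase i₀, a i = 1 := by
    rw [Finset.add_sum_erase _ _ (Finset.mem_univ i₀), hsa]
  have h3 : ∑ i, a i * α i
      = a i₀ * α i₀ + ∑ i ∈ Finset.univ.erase i₀, a i * α i :=
    (Finset.add_sum_erase _ _ (Finset.mem_univ i₀)).symm
  have h4 : ∑ i ∈ Finset.univ.erase i₀, a i * (⨆ i, α i)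
      = (1 - a i₀) * (⨆ i, α i) := by
    rw [← Finset.sum_mul]
    have : ∑ i ∈ Finset.univ.erase i₀, a i = 1 - a i₀ := by linarith
    rw [this]
  have h5 : a i₀ * α i₀ + (1 - a i₀) * (⨆ i, α i)
      ≤ ε * (⨅ i, α i) + (1 - ε) * (⨆ i, α i) := by
    rw [hi₀]
    nlinarith [hε i₀, hinf_le]
  linarith

lemma ciSup_cont {n : ℕ} (hn : 0 < n) :
    Continuous fun v : Fin n → ℝ => ⨆ i, v i := by
  haveI : Nonempty (Fin n) := Fin.pos_iff_nonempty.mp hn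
  have h : ∀ v : Fin n → ℝ, (⨆ i, v i)
      = Finset.univ.sup' Finset.univ_nonempty (fun i => v i) := fun v =>
    (Finset.sup'_univ_eq_ciSup _).symm
  simp only [h]
  exact Continuous.finset_sup'_apply Finset.univ_nonempty fun i _ => continuous_apply i

end Aux

/-- the superlevel set `Z_K = {(α,β) : U(α,β) ≥ K}` is contained in
`{-R ≤ min α + min β, max α + max β ≤ R}` for some finite `R`, and its image in the
quotient `ℝ^{n+m}/∼_⊕` — realized as the image of the map `(α,β) ↦ (α_i + β_j)_{i,j}`,
which identifies the quotient — is compact. -/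
theorem superlevel_set_bounded_and_quotient_compact
    {d n m : ℕ} (hn : 0 < n) (hm : 0 < m)
    (xs : Fin n → EuclideanSpace ℝ (Fin d)) (ys : Fin m → EuclideanSpace ℝ (Fin d))
    (a : Fin n → ℝ) (b : Fin m → ℝ)
    (ha : ∀ i, 0 < a i) (hb : ∀ j, 0 < b j)
    (hsa : ∑ i, a i = 1) (hsb : ∑ j, b j = 1)
    (γ : Measure (EuclideanSpace ℝ (Fin d) × EuclideanSpace ℝ (Fin d)))
    [IsProbabilityMeasure γ] (hac : γ ≪ volume) (K : ℝ) :
    ∃ R : ℝ,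
      (∀ q : (Fin n → ℝ) × (Fin m → ℝ), K ≤ Udual xs ys a b γ q.1 q.2 →
        (-R ≤ (⨅ i, q.1 i) + (⨅ j, q.2 j)) ∧ ((⨆ i, q.1 i) + (⨆ j, q.2 j) ≤ R)) ∧
      IsCompact
        ((fun q : (Fin n → ℝ) × (Fin m → ℝ) =>
            (fun ij : Fin n × Fin m => q.1 ij.1 + q.2 ij.2)) ''
          {q | K ≤ Udual xs ys a b γ q.1 q.2}) := by
  haveI hNn : Nonempty (Fin n) := Fin.pos_iff_nonempty.mp hn
  haveI hNm : Nonempty (Fin m) := Fin.pos_iff_nonempty.mp hm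
  classical
  set X : ℝ := ⨆ i, ‖xs i‖ with hXdef
  set Y : ℝ := ⨆ j, ‖ys j‖ with hYdef
  have hX0 : 0 ≤ X := le_trans (norm_nonneg (xs (Classical.arbitrary _)))
    (fin_le_ciSup hn (fun i => ‖xs i‖) _)
  have hY0 : 0 ≤ Y := le_trans (norm_nonneg (ys (Classical.arbitrary _)))
    (fin_le_ciSup hm (fun j => ‖ys j‖) _)
  set Cx : ℝ := ⨆ i, ‖xs i‖ ^ 2 / 2 with hCxdef
  set Cy : ℝ := ⨆ j, ‖ys j‖ ^ 2 / 2 with hCydef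
  have hCx : ∀ i, ‖xs i‖ ^ 2 / 2 ≤ Cx := fun i => fin_le_ciSup hn (fun i => ‖xs i‖ ^ 2 / 2) i
  have hCy : ∀ j, ‖ys j‖ ^ 2 / 2 ≤ Cy := fun j => fin_le_ciSup hm (fun j => ‖ys j‖ ^ 2 / 2) j
  -- minimal weights
  set εa : ℝ := ⨅ i, a i with hεadef
  set εb : ℝ := ⨅ j, b j with hεbdef
  have hεa_le : ∀ i, εa ≤ a i := fun i => fin_ciInf_le hn a i
  have hεb_le : ∀ j, εb ≤ b j := fun j => fin_ciInf_le hm b j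
  have hεa_pos : 0 < εa := by
    obtain ⟨i, hi⟩ := exists_eq_ciInf_of_finite (f := a)
    rw [hεadef, ← hi]; exact ha i
  have hεb_pos : 0 < εb := by
    obtain ⟨j, hj⟩ := exists_eq_ciInf_of_finite (f := b)
    rw [hεbdef, ← hj]; exact hb j
  set ε : ℝ := min εa εb with hεdef
  have hε_pos : 0 < ε := lt_min hεa_pos hεb_pos
  have hε_le_one : ε ≤ 1 := by
    have h1 := Finset.single_le_sum (f := a) (fun i _ => (ha i).le)
      (Finset.mem_univ (Classical.arbitrary (Fin n)))
    calc ε ≤ εa := min_le_left _ _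
      _ ≤ a _ := hεa_le _
      _ ≤ 1 := by rw [← hsa]; exact h1
  -- the base integrand and its integral c > 0
  set w : EuclideanSpace ℝ (Fin d) × EuclideanSpace ℝ (Fin d) → ℝ :=
    fun p => Real.exp (-(‖p.1‖ * X) - ‖p.2‖ * Y - ‖p.1‖ ^ 2 / 2 - ‖p.2‖ ^ 2 / 2) with hwdef
  have hw_cont : Continuous w := by
    apply Real.continuous_exp.comp
    exact ((((continuous_fst.norm.mul continuous_const).neg).sub
      (continuous_snd.norm.mul continuous_const)).sub
      ((continuous_fst.norm.pow 2).div_const 2)).sub ((continuous_snd.norm.pow 2).div_const 2)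
  have hw_le : ∀ p, ‖w p‖ ≤ (1 : ℝ) := by
    intro p
    rw [hwdef, Real.norm_eq_abs, Real.abs_exp, show (1:ℝ) = Real.exp 0 from Real.exp_zero.symm]
    apply Real.exp_le_exp.mpr
    have h1 : 0 ≤ ‖p.1‖ * X := mul_nonneg (norm_nonneg _) hX0
    have h2 : 0 ≤ ‖p.2‖ * Y := mul_nonneg (norm_nonneg _) hY0
    nlinarith [sq_nonneg ‖p.1‖, sq_nonneg ‖p.2‖]
  have hw_int : Integrable w γ :=
    (integrable_const (1 : ℝ)).mono' hw_cont.aestronglyMeasurable (ae_of_all _ hw_le)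
  set c : ℝ := ∫ p, w p ∂γ with hcdef
  have hc_pos : 0 < c := by
    rw [hcdef]
    rw [integral_pos_iff_support_of_nonneg (fun p => (Real.exp_pos _).le) hw_int]
    have hsupp : Function.support w = Set.univ :=
      Set.eq_univ_iff_forall.mpr fun p => (Real.exp_pos _).ne'
    rw [hsupp, measure_univ]
    exact zero_lt_one
  -- integral lower bound
  have hI_ge : ∀ (α : Fin n → ℝ) (β : Fin m → ℝ),
      c * Real.exp ((⨆ i, α i) + (⨆ j, β j)) ≤
        ∫ p, Real.exp (fmax xs p.1 α + fmax ys p.2 β - ‖p.1‖ ^ 2 / 2 - ‖p.2‖ ^ 2 / 2) ∂γ := by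
    intro α β
    have hpt : ∀ p, Real.exp ((⨆ i, α i) + (⨆ j, β j)) * w p ≤
        Real.exp (fmax xs p.1 α + fmax ys p.2 β - ‖p.1‖ ^ 2 / 2 - ‖p.2‖ ^ 2 / 2) := by
      intro p
      rw [hwdef, ← Real.exp_add]
      apply Real.exp_le_exp.mpr
      have h1 := fmax_ge hn xs α p.1
      have h2 := fmax_ge hm ys β p.2
      linarith
    calc c * Real.exp ((⨆ i, α i) + (⨆ j, β j))
        = Real.exp ((⨆ i, α i) + (⨆ j, β j)) * c := mul_comm _ _
      _ = ∫ p, Real.exp ((⨆ i, α i) + (⨆ j, β j)) * w p ∂γ := by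
          rw [hcdef, integral_const_mul]
      _ ≤ _ := integral_mono (hw_int.const_mul _)
          (integrand_integrable hn hm xs ys γ α β) hpt
  -- constants
  set A : ℝ := Real.log (2 / c) with hAdef
  set S : ℝ := Cx + Cy + 2 * A - 1 - K with hSdef
  set T : ℝ := (Cx + Cy + 1 + (1 - ε) * S - K) / ε with hTdef
  set R : ℝ := max (max S T) 0 with hRdef
  have hR0 : (0 : ℝ) ≤ R := le_max_right _ _
  have hSR : S ≤ R := le_trans (le_max_left _ _) (le_max_left _ _)
  have hTR : T ≤ R := le_trans (le_max_right _ _) (le_max_left _ _)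
  -- PART 1
  have hpart1 : ∀ q : (Fin n → ℝ) × (Fin m → ℝ), K ≤ Udual xs ys a b γ q.1 q.2 →
      (-R ≤ (⨅ i, q.1 i) + (⨅ j, q.2 j)) ∧ ((⨆ i, q.1 i) + (⨆ j, q.2 j) ≤ R) := by
    intro q hq
    have hIle := hI_ge q.1 q.2
    have hInonneg : (0:ℝ) ≤ ∫ p, Real.exp
        (fmax xs p.1 q.1 + fmax ys p.2 q.2 - ‖p.1‖ ^ 2 / 2 - ‖p.2‖ ^ 2 / 2) ∂γ :=
      integral_nonneg fun p => (Real.exp_pos _).le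
    -- linear bounds
    have hLa : ∑ i, a i * (q.1 i + ‖xs i‖ ^ 2 / 2)
        ≤ ε * (⨅ i, q.1 i) + (1 - ε) * (⨆ i, q.1 i) + Cx := by
      have e1 : ∑ i, a i * (q.1 i + ‖xs i‖ ^ 2 / 2)
          = ∑ i, a i * q.1 i + ∑ i, a i * (‖xs i‖ ^ 2 / 2) := by
        rw [← Finset.sum_add_distrib]
        exact Finset.sum_congr rfl fun i _ => by ring
      have e2 : ∑ i, a i * (‖xs i‖ ^ 2 / 2) ≤ Cx := by
        calc ∑ i, a i * (‖xs i‖ ^ 2 / 2) ≤ ∑ i, a i * Cx :=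
              Finset.sum_le_sum fun i _ => mul_le_mul_of_nonneg_left (hCx i) (ha i).le
          _ = Cx := by rw [← Finset.sum_mul, hsa, one_mul]
      have e3 := weighted_bounds hn a ha hsa q.1 ε fun i => le_trans (min_le_left _ _) (hεa_le i)
      linarith
    have hLb : ∑ j, b j * (q.2 j + ‖ys j‖ ^ 2 / 2)
        ≤ ε * (⨅ j, q.2 j) + (1 - ε) * (⨆ j, q.2 j) + Cy := by
      have e1 : ∑ j, b j * (q.2 j + ‖ys j‖ ^ 2 / 2)
          = ∑ j, b j * q.2 j + ∑ j, b j * (‖ys j‖ ^ 2 / 2) := by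
        rw [← Finset.sum_add_distrib]
        exact Finset.sum_congr rfl fun j _ => by ring
      have e2 : ∑ j, b j * (‖ys j‖ ^ 2 / 2) ≤ Cy := by
        calc ∑ j, b j * (‖ys j‖ ^ 2 / 2) ≤ ∑ j, b j * Cy :=
              Finset.sum_le_sum fun j _ => mul_le_mul_of_nonneg_left (hCy j) (hb j).le
          _ = Cy := by rw [← Finset.sum_mul, hsb, one_mul]
      have e3 := weighted_bounds hm b hb hsb q.2 ε fun j => le_trans (min_le_right _ _) (hεb_le j)
      linarith
    have hiα_le_sα : (⨅ i, q.1 i) ≤ ⨆ i, q.1 i :=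
      le_trans (fin_ciInf_le hn q.1 (Classical.arbitrary _)) (fin_le_ciSup hn q.1 _)
    have hiβ_le_sβ : (⨅ j, q.2 j) ≤ ⨆ j, q.2 j :=
      le_trans (fin_ciInf_le hm q.2 (Classical.arbitrary _)) (fin_le_ciSup hm q.2 _)
    have hU : K ≤ ∑ i, a i * (q.1 i + ‖xs i‖ ^ 2 / 2) + ∑ j, b j * (q.2 j + ‖ys j‖ ^ 2 / 2)
        - (∫ p, Real.exp (fmax xs p.1 q.1 + fmax ys p.2 q.2
            - ‖p.1‖ ^ 2 / 2 - ‖p.2‖ ^ 2 / 2) ∂γ) + 1 := hq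
    -- exponential lower bound
    have hexp : 2 * (((⨆ i, q.1 i) + (⨆ j, q.2 j)) - A + 1)
        ≤ c * Real.exp ((⨆ i, q.1 i) + (⨆ j, q.2 j)) := by
      have hA2 : c * Real.exp A = 2 := by
        rw [hAdef, Real.exp_log (by positivity)]
        field_simp
      have hsplit : Real.exp ((⨆ i, q.1 i) + (⨆ j, q.2 j))
          = Real.exp A * Real.exp (((⨆ i, q.1 i) + (⨆ j, q.2 j)) - A) := by
        rw [← Real.exp_add]
        congr 1
        ring
      have h3 := Real.add_one_le_exp (((⨆ i, q.1 i) + (⨆ j, q.2 j)) - A)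
      calc 2 * (((⨆ i, q.1 i) + (⨆ j, q.2 j)) - A + 1)
          ≤ 2 * Real.exp (((⨆ i, q.1 i) + (⨆ j, q.2 j)) - A) := by linarith
        _ = c * Real.exp A * Real.exp (((⨆ i, q.1 i) + (⨆ j, q.2 j)) - A) := by rw [hA2]
        _ = c * Real.exp ((⨆ i, q.1 i) + (⨆ j, q.2 j)) := by rw [hsplit]; ring
    -- sup bound
    have hs : (⨆ i, q.1 i) + (⨆ j, q.2 j) ≤ S := by
      have h1 : ε * (⨅ i, q.1 i) + (1 - ε) * (⨆ i, q.1 i) ≤ ⨆ i, q.1 i := by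
        have := mul_le_mul_of_nonneg_left hiα_le_sα hε_pos.le
        linarith
      have h2 : ε * (⨅ j, q.2 j) + (1 - ε) * (⨆ j, q.2 j) ≤ ⨆ j, q.2 j := by
        have := mul_le_mul_of_nonneg_left hiβ_le_sβ hε_pos.le
        linarith
      rw [hSdef]
      linarith [hU, hLa, hLb, hIle, hexp]
    -- inf bound
    have ht : -T ≤ (⨅ i, q.1 i) + (⨅ j, q.2 j) := by
      have h1 : (1 - ε) * ((⨆ i, q.1 i) + (⨆ j, q.2 j)) ≤ (1 - ε) * S :=
        mul_le_mul_of_nonneg_left hs (by linarith)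
      have hd1 : ε * ((⨅ i, q.1 i) + (⨅ j, q.2 j))
          = ε * (⨅ i, q.1 i) + ε * (⨅ j, q.2 j) := mul_add _ _ _
      have hd2 : (1 - ε) * ((⨆ i, q.1 i) + (⨆ j, q.2 j))
          = (1 - ε) * (⨆ i, q.1 i) + (1 - ε) * (⨆ j, q.2 j) := mul_add _ _ _
      have h2 : K - (Cx + Cy + 1 + (1 - ε) * S)
          ≤ ε * ((⨅ i, q.1 i) + (⨅ j, q.2 j)) := by
        linarith [hU, hLa, hLb, hInonneg, h1, hd1, hd2]
      have h3 : ε * (-T) = K - (Cx + Cy + 1 + (1 - ε) * S) := by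
        rw [hTdef]
        field_simp
        ring
      have h4 : ε * (-T) ≤ ε * ((⨅ i, q.1 i) + (⨅ j, q.2 j)) := by linarith
      exact le_of_mul_le_mul_left h4 hε_pos
    exact ⟨le_trans (neg_le_neg hTR) ht, le_trans hs hSR⟩
  refine ⟨R, hpart1, ?_⟩
  -- PART 2: compactness of the image in the quotient
  -- continuity of Udual
  have hsum_cont : Continuous fun q : (Fin n → ℝ) × (Fin m → ℝ) =>
      ∑ i, a i * (q.1 i + ‖xs i‖ ^ 2 / 2) + ∑ j, b j * (q.2 j + ‖ys j‖ ^ 2 / 2) := by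
    apply Continuous.add
    · exact continuous_finset_sum _ fun i _ => continuous_const.mul
        (((continuous_apply i).comp continuous_fst).add continuous_const)
    · exact continuous_finset_sum _ fun j _ => continuous_const.mul
        (((continuous_apply j).comp continuous_snd).add continuous_const)
  have hint_cont : Continuous fun q : (Fin n → ℝ) × (Fin m → ℝ) =>
      ∫ p, Real.exp (fmax xs p.1 q.1 + fmax ys p.2 q.2
        - ‖p.1‖ ^ 2 / 2 - ‖p.2‖ ^ 2 / 2) ∂γ := by
    rw [continuous_iff_continuousAt]
    intro q₀
    have hopen1 : ∀ᶠ q : (Fin n → ℝ) × (Fin m → ℝ) in nhds q₀,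
        (⨆ i, q.1 i) < (⨆ i, q₀.1 i) + 1 := by
      apply (isOpen_lt ((ciSup_cont hn).comp continuous_fst) continuous_const).mem_nhds
      simp only [Set.mem_setOf_eq, Function.comp]
      linarith
    have hopen2 : ∀ᶠ q : (Fin n → ℝ) × (Fin m → ℝ) in nhds q₀,
        (⨆ j, q.2 j) < (⨆ j, q₀.2 j) + 1 := by
      apply (isOpen_lt ((ciSup_cont hm).comp continuous_snd) continuous_const).mem_nhds
      simp only [Set.mem_setOf_eq, Function.comp]
      linarith
    apply continuousAt_of_dominated (bound := fun _ =>
      Real.exp (X ^ 2 / 2 + Y ^ 2 / 2 + ((⨆ i, q₀.1 i) + 1) + ((⨆ j, q₀.2 j) + 1)))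
    · exact Filter.Eventually.of_forall fun q =>
        (integrand_cont hn hm xs ys q.1 q.2).aestronglyMeasurable
    · filter_upwards [hopen1, hopen2] with q hq1 hq2
      apply ae_of_all
      intro p
      rw [Real.norm_eq_abs, Real.abs_exp]
      refine le_trans (integrand_le hn hm xs ys q.1 q.2 p) (Real.exp_le_exp.mpr ?_)
      have := hXdef
      linarith
    · exact integrable_const _
    · apply ae_of_all
      intro p
      apply Continuous.continuousAt
      apply Real.continuous_exp.comp
      exact ((((fmax_cont hn xs).comp (continuous_const.prodMk continuous_fst)).add
        ((fmax_cont hm ys).comp (continuous_const.prodMk continuous_snd))).sub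
        continuous_const).sub continuous_const
  have hU_cont : Continuous fun q : (Fin n → ℝ) × (Fin m → ℝ) =>
      Udual xs ys a b γ q.1 q.2 := by
    unfold Udual
    exact (hsum_cont.sub hint_cont).add continuous_const
  set Z : Set ((Fin n → ℝ) × (Fin m → ℝ)) := {q | K ≤ Udual xs ys a b γ q.1 q.2} with hZdef
  have hZc : IsClosed Z := isClosed_le continuous_const hU_cont
  set i₀ : Fin n := ⟨0, hn⟩ with hi₀def
  set Sl : Set ((Fin n → ℝ) × (Fin m → ℝ)) := {q | q.1 i₀ = 0} with hSldef
  have hSlc : IsClosed Sl :=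
    isClosed_eq ((continuous_apply i₀).comp continuous_fst) continuous_const
  have hbox : Z ∩ Sl ⊆ (Metric.closedBall (0 : Fin n → ℝ) (2 * R)) ×ˢ
      (Metric.closedBall (0 : Fin m → ℝ) (2 * R)) := by
    rintro q ⟨hqZ, hq0⟩
    obtain ⟨h_t, h_s⟩ := hpart1 q hqZ
    have hiα_le : ∀ i, (⨅ i, q.1 i) ≤ q.1 i := fun i => fin_ciInf_le hn q.1 i
    have hsα_ge : ∀ i, q.1 i ≤ ⨆ i, q.1 i := fun i => fin_le_ciSup hn q.1 i
    have hiβ_le : ∀ j, (⨅ j, q.2 j) ≤ q.2 j := fun j => fin_ciInf_le hm q.2 j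
    have hsβ_ge : ∀ j, q.2 j ≤ ⨆ j, q.2 j := fun j => fin_le_ciSup hm q.2 j
    have hiα0 : (⨅ i, q.1 i) ≤ 0 := by
      have := hiα_le i₀
      rw [hq0] at this
      exact this
    have hsα0 : 0 ≤ ⨆ i, q.1 i := by
      have := hsα_ge i₀
      rw [hq0] at this
      exact this
    have hiβ_sβ : (⨅ j, q.2 j) ≤ ⨆ j, q.2 j := le_trans (hiβ_le (Classical.arbitrary _))
      (hsβ_ge _)
    have hsβ_le : (⨆ j, q.2 j) ≤ R := by linarith
    have hiβ_ge : -R ≤ ⨅ j, q.2 j := by linarith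
    have hsα_le : (⨆ i, q.1 i) ≤ 2 * R := by linarith
    have hiα_ge : -(2 * R) ≤ ⨅ i, q.1 i := by linarith
    constructor
    · rw [Metric.mem_closedBall, dist_zero_right]
      rw [pi_norm_le_iff_of_nonneg (by linarith)]
      intro i
      rw [Real.norm_eq_abs, abs_le]
      exact ⟨by linarith [hiα_le i], by linarith [hsα_ge i]⟩
    · rw [Metric.mem_closedBall, dist_zero_right]
      rw [pi_norm_le_iff_of_nonneg (by linarith)]
      intro j
      rw [Real.norm_eq_abs, abs_le]
      exact ⟨by linarith [hiβ_le j], by linarith [hsβ_ge j]⟩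
  have hcomp : IsCompact (Z ∩ Sl) :=
    IsCompact.of_isClosed_subset
      ((isCompact_closedBall _ _).prod (isCompact_closedBall _ _))
      (hZc.inter hSlc) hbox
  have hΦ : Continuous fun q : (Fin n → ℝ) × (Fin m → ℝ) =>
      (fun ij : Fin n × Fin m => q.1 ij.1 + q.2 ij.2) :=
    continuous_pi fun ij => ((continuous_apply ij.1).comp continuous_fst).add
      ((continuous_apply ij.2).comp continuous_snd)
  have himg : (fun q : (Fin n → ℝ) × (Fin m → ℝ) =>
      (fun ij : Fin n × Fin m => q.1 ij.1 + q.2 ij.2)) '' Z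
      = (fun q : (Fin n → ℝ) × (Fin m → ℝ) =>
      (fun ij : Fin n × Fin m => q.1 ij.1 + q.2 ij.2)) '' (Z ∩ Sl) := by
    apply Set.Subset.antisymm
    · rintro z ⟨q, hq, rfl⟩
      refine ⟨(fun i => q.1 i - q.1 i₀, fun j => q.2 j + q.1 i₀), ⟨?_, ?_⟩, ?_⟩
      · show K ≤ Udual xs ys a b γ _ _
        rw [Udual_shift hn hm xs ys a b hsa hsb γ q.1 q.2 (q.1 i₀)]
        exact hq
      · show (fun i => q.1 i - q.1 i₀) i₀ = 0
        simp
      · funext ij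
        simp only
        ring
    · exact Set.image_mono Set.inter_subset_left
  rw [himg]
  exact hcomp.image hΦ

end
end

section
/- Let μ = Σ a_i δ_{x_i}, ν = Σ b_j δ_{y_j} be discrete probability measures with positive weights on a Polish space, and σ = Σ_{i,j} σ_{ij} δ_{(x_i,y_j)} a positive measure with all σ_{ij} > 0. Then the Schrödinger system a_i = Σ_j σ_{ij} exp(p_i + q_j) for all i, b_j = Σ_i σ_{ij} exp(p_i + q_j) for all j, admits a solution (p,q) ∈ ℝ^n × ℝ^m, unique up to the shift (p,q) ↦ (p + r𝟏, q - r𝟏). Moreover the unique minimizer of H(π|σ) over π ∈ Π(μ,ν) is π* = Σ_{i,j} σ_{ij} exp(p_i + q_j) δ_{(x_i,y_j)}. -/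
noncomputable section

/-- A discrete coupling of the weight vectors `a` and `b`. -/
def IsCoupling {n m : ℕ} (a : Fin n → ℝ) (b : Fin m → ℝ)
    (π : Fin n → Fin m → ℝ) : Prop :=
  (∀ i j, 0 ≤ π i j) ∧ (∀ i, ∑ j, π i j = a i) ∧ (∀ j, ∑ i, π i j = b j)

/-- Discrete relative entropy `H(π|σ) = Σ_{i,j} π_{ij} log(π_{ij}/σ_{ij})`. -/
def dEnt {n m : ℕ} (π σ : Fin n → Fin m → ℝ) : ℝ :=
  ∑ i, ∑ j, π i j * Real.log (π i j / σ i j)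

namespace DSS
open Real Finset

def ent (x s : ℝ) : ℝ := x * Real.log (x / s)

lemma dEnt_def {n m : ℕ} (P S : Fin n → Fin m → ℝ) :
    dEnt P S = ∑ i, ∑ j, ent (P i j) (S i j) := rfl

lemma ent_lower {x s : ℝ} (hx : 0 ≤ x) (hs : 0 < s) : x - s ≤ x * Real.log (x / s) := by
  rcases hx.eq_or_lt with h | h
  · rw [← h]; simp; linarith
  · have hlog : Real.log (s / x) ≤ s / x - 1 := Real.log_le_sub_one_of_pos (by positivity)
    have hrw : Real.log (s / x) = - Real.log (x / s) := by
      rw [← Real.log_inv, inv_div]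
    have h2 : 1 - s / x ≤ Real.log (x / s) := by rw [hrw] at hlog; linarith
    have h3 := mul_le_mul_of_nonneg_left h2 h.le
    have h4 : x * (1 - s / x) = x - s := by field_simp
    linarith

lemma ent_lower_strict {x s : ℝ} (hx : 0 ≤ x) (hs : 0 < s) (hne : x ≠ s) :
    x - s < x * Real.log (x / s) := by
  rcases hx.eq_or_lt with h | h
  · rw [← h]; simp; linarith
  · have hlog : Real.log (s / x) < s / x - 1 := by
      apply Real.log_lt_sub_one_of_pos (by positivity)
      intro hcon
      apply hne
      field_simp at hcon
      linarith
    have hrw : Real.log (s / x) = - Real.log (x / s) := by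
      rw [← Real.log_inv, inv_div]
    have h2 : 1 - s / x < Real.log (x / s) := by rw [hrw] at hlog; linarith
    have h3 := mul_lt_mul_of_pos_left h2 h
    have h4 : x * (1 - s / x) = x - s := by field_simp
    linarith

lemma gibbs_pos {n m : ℕ} {P R : Fin n → Fin m → ℝ}
    (hP : ∀ i j, 0 ≤ P i j) (hR : ∀ i j, 0 < R i j)
    (hsum : ∑ i, ∑ j, P i j = ∑ i, ∑ j, R i j) (hne : P ≠ R) :
    0 < ∑ i, ∑ j, P i j * Real.log (P i j / R i j) := by
  obtain ⟨i0, hi0⟩ := Function.ne_iff.mp hne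
  obtain ⟨j0, hj0⟩ := Function.ne_iff.mp hi0
  have key : ∑ i, ∑ j, (P i j - R i j) < ∑ i, ∑ j, P i j * Real.log (P i j / R i j) := by
    apply Finset.sum_lt_sum
    · intro i _
      exact Finset.sum_le_sum fun j _ => ent_lower (hP i j) (hR i j)
    · refine ⟨i0, Finset.mem_univ _, Finset.sum_lt_sum (fun j _ => ent_lower (hP i0 j) (hR i0 j)) ⟨j0, Finset.mem_univ _, ent_lower_strict (hP i0 j0) (hR i0 j0) hj0⟩⟩
  have hz : ∑ i, ∑ j, (P i j - R i j) = 0 := by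
    simp only [Finset.sum_sub_distrib]
    linarith
  linarith


def pert {n m : ℕ} (P : Fin n → Fin m → ℝ) (i i' : Fin n) (j j' : Fin m) (t : ℝ) :
    Fin n → Fin m → ℝ :=
  fun u v => P u v + (if u = i ∧ v = j then t else 0) + (if u = i' ∧ v = j' then t else 0)
    - (if u = i ∧ v = j' then t else 0) - (if u = i' ∧ v = j then t else 0)

lemma pert_zero {n m : ℕ} (P : Fin n → Fin m → ℝ) (i i' : Fin n) (j j' : Fin m) :
    pert P i i' j j' 0 = P := by
  funext u v; simp [pert]

lemma pert_apply_of_ne {n m : ℕ} (P : Fin n → Fin m → ℝ) {i i' : Fin n} {j j' : Fin m} (t : ℝ)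
    {u : Fin n} {v : Fin m} (h1 : ¬(u = i ∧ v = j)) (h2 : ¬(u = i' ∧ v = j'))
    (h3 : ¬(u = i ∧ v = j')) (h4 : ¬(u = i' ∧ v = j)) :
    pert P i i' j j' t u v = P u v := by
  simp [pert, h1, h2, h3, h4]

lemma pert_apply₁ {n m : ℕ} (P : Fin n → Fin m → ℝ) {i i' : Fin n} {j j' : Fin m} (t : ℝ)
    (hii' : i ≠ i') (hjj' : j ≠ j') : pert P i i' j j' t i j = P i j + t := by
  simp [pert, hii', hjj', Ne.symm hii', Ne.symm hjj']

lemma pert_apply₂ {n m : ℕ} (P : Fin n → Fin m → ℝ) {i i' : Fin n} {j j' : Fin m} (t : ℝ)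
    (hii' : i ≠ i') (hjj' : j ≠ j') : pert P i i' j j' t i' j' = P i' j' + t := by
  simp [pert, hii', hjj', Ne.symm hii', Ne.symm hjj']

lemma pert_apply₃ {n m : ℕ} (P : Fin n → Fin m → ℝ) {i i' : Fin n} {j j' : Fin m} (t : ℝ)
    (hii' : i ≠ i') (hjj' : j ≠ j') : pert P i i' j j' t i j' = P i j' - t := by
  simp [pert, hii', hjj', Ne.symm hii', Ne.symm hjj']

lemma pert_apply₄ {n m : ℕ} (P : Fin n → Fin m → ℝ) {i i' : Fin n} {j j' : Fin m} (t : ℝ)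
    (hii' : i ≠ i') (hjj' : j ≠ j') : pert P i i' j j' t i' j = P i' j - t := by
  simp [pert, hii', hjj', Ne.symm hii', Ne.symm hjj']

lemma pert_row {n m : ℕ} (P : Fin n → Fin m → ℝ) {i i' : Fin n} {j j' : Fin m} (t : ℝ)
    (hjj' : j ≠ j') (u : Fin n) : ∑ v, pert P i i' j j' t u v = ∑ v, P u v := by
  simp only [pert, Finset.sum_sub_distrib, Finset.sum_add_distrib, ite_and]
  simp [Finset.sum_ite_eq', Finset.sum_ite_eq]
  ring

lemma pert_col {n m : ℕ} (P : Fin n → Fin m → ℝ) {i i' : Fin n} {j j' : Fin m} (t : ℝ)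
    (hii' : i ≠ i') (v : Fin m) : ∑ u, pert P i i' j j' t u v = ∑ u, P u v := by
  simp only [pert, Finset.sum_sub_distrib, Finset.sum_add_distrib]
  have e : ∀ (w : Fin n) (z : Fin m) (c : ℝ), (∑ u, if u = w ∧ v = z then c else 0)
      = if v = z then c else 0 := by
    intro w z c
    rcases eq_or_ne v z with rfl | hvz
    · simp [Finset.sum_ite_eq']
    · simp [hvz]
  simp [e]

lemma pert_coupling {n m : ℕ} {a : Fin n → ℝ} {b : Fin m → ℝ} {P : Fin n → Fin m → ℝ}
    (hP : IsCoupling a b P) {i i' : Fin n} {j j' : Fin m} {t : ℝ}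
    (hii' : i ≠ i') (hjj' : j ≠ j')
    (h1 : 0 ≤ P i j + t) (h2 : 0 ≤ P i' j' + t) (h3 : 0 ≤ P i j' - t) (h4 : 0 ≤ P i' j - t) :
    IsCoupling a b (pert P i i' j j' t) := by
  refine ⟨?_, fun u => by rw [pert_row P t hjj' u, hP.2.1 u],
    fun v => by rw [pert_col P t hii' v, hP.2.2 v]⟩
  intro u v
  by_cases c1 : u = i ∧ v = j
  · obtain ⟨rfl, rfl⟩ := c1; rw [pert_apply₁ P t hii' hjj']; exact h1
  by_cases c2 : u = i' ∧ v = j'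
  · obtain ⟨rfl, rfl⟩ := c2; rw [pert_apply₂ P t hii' hjj']; exact h2
  by_cases c3 : u = i ∧ v = j'
  · obtain ⟨rfl, rfl⟩ := c3; rw [pert_apply₃ P t hii' hjj']; exact h3
  by_cases c4 : u = i' ∧ v = j
  · obtain ⟨rfl, rfl⟩ := c4; rw [pert_apply₄ P t hii' hjj']; exact h4
  · rw [pert_apply_of_ne P t c1 c2 c3 c4]; exact hP.1 u v

lemma dEnt_pert {n m : ℕ} (P S : Fin n → Fin m → ℝ) {i i' : Fin n} {j j' : Fin m} (t : ℝ)
    (hii' : i ≠ i') (hjj' : j ≠ j') :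
    dEnt (pert P i i' j j' t) S = dEnt P S
      + (ent (P i j + t) (S i j) - ent (P i j) (S i j))
      + (ent (P i' j' + t) (S i' j') - ent (P i' j') (S i' j'))
      + (ent (P i j' - t) (S i j') - ent (P i j') (S i j'))
      + (ent (P i' j - t) (S i' j) - ent (P i' j) (S i' j)) := by
  classical
  have hprod : ∀ Q : Fin n → Fin m → ℝ, dEnt Q S = ∑ p : Fin n × Fin m, ent (Q p.1 p.2) (S p.1 p.2) := by
    intro Q
    rw [Fintype.sum_prod_type]
    rfl
  set T : Finset (Fin n × Fin m) := {(i, j), (i', j'), (i, j'), (i', j)} with hT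
  have hmem : ∀ p : Fin n × Fin m, p ∉ T → pert P i i' j j' t p.1 p.2 = P p.1 p.2 := by
    intro p hp
    simp only [hT, Finset.mem_insert, Finset.mem_singleton, Prod.ext_iff, not_or] at hp
    exact pert_apply_of_ne P t (fun h => hp.1 ⟨h.1, h.2⟩) (fun h => hp.2.1 ⟨h.1, h.2⟩)
      (fun h => hp.2.2.1 ⟨h.1, h.2⟩) (fun h => hp.2.2.2 ⟨h.1, h.2⟩)
  have hsplit : ∀ Q : Fin n → Fin m → ℝ,
      (∑ p : Fin n × Fin m, ent (Q p.1 p.2) (S p.1 p.2))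
        = (∑ p ∈ Finset.univ \ T, ent (Q p.1 p.2) (S p.1 p.2)) + ∑ p ∈ T, ent (Q p.1 p.2) (S p.1 p.2) := by
    intro Q
    rw [Finset.sum_sdiff (Finset.subset_univ T)]
  have hoff : (∑ p ∈ Finset.univ \ T, ent (pert P i i' j j' t p.1 p.2) (S p.1 p.2))
      = ∑ p ∈ Finset.univ \ T, ent (P p.1 p.2) (S p.1 p.2) := by
    refine Finset.sum_congr rfl fun p hp => ?_
    rw [hmem p (Finset.mem_sdiff.mp hp).2]
  have hdist : ((i, j) : Fin n × Fin m) ∉ ({(i', j'), (i, j'), (i', j)} : Finset (Fin n × Fin m)) := by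
    simp [Prod.ext_iff, hii', hjj']
  have hdist2 : ((i', j') : Fin n × Fin m) ∉ ({(i, j'), (i', j)} : Finset (Fin n × Fin m)) := by
    simp [Prod.ext_iff, Ne.symm hii', Ne.symm hjj']
  have hdist3 : ((i, j') : Fin n × Fin m) ∉ ({(i', j)} : Finset (Fin n × Fin m)) := by
    simp [Prod.ext_iff, hii']
  have hTsum : ∀ Q : Fin n → Fin m → ℝ, (∑ p ∈ T, ent (Q p.1 p.2) (S p.1 p.2))
      = ent (Q i j) (S i j) + ent (Q i' j') (S i' j') + ent (Q i j') (S i j') + ent (Q i' j) (S i' j) := by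
    intro Q
    rw [hT]
    rw [Finset.sum_insert hdist, Finset.sum_insert hdist2, Finset.sum_insert hdist3,
      Finset.sum_singleton]
    ring
  rw [hprod, hprod, hsplit, hsplit, hoff, hTsum, hTsum,
    pert_apply₁ P t hii' hjj', pert_apply₂ P t hii' hjj', pert_apply₃ P t hii' hjj',
    pert_apply₄ P t hii' hjj']
  ring


lemma entDerivAdd {c s : ℝ} (hc : 0 < c) (hs : 0 < s) :
    HasDerivAt (fun t => ent (c + t) s) (Real.log (c / s) + 1) 0 := by
  have h1 : HasDerivAt (fun t : ℝ => c + t) 1 0 := by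
    simpa using (hasDerivAt_id (0 : ℝ)).const_add c
  have h2 : HasDerivAt (fun t : ℝ => (c + t) / s) (1 / s) 0 := h1.div_const s
  have h3 : HasDerivAt (fun t : ℝ => Real.log ((c + t) / s)) ((c / s)⁻¹ * (1 / s)) 0 := by
    have hl : HasDerivAt Real.log ((c / s)⁻¹) ((c + 0) / s) := by
      rw [add_zero]; exact Real.hasDerivAt_log (show (0:ℝ) < c/s by positivity).ne'
    exact hl.comp 0 h2
  have h4 := h1.mul h3
  simp only [add_zero] at h4
  exact h4.congr_deriv (by field_simp)

lemma entDerivSub {c s : ℝ} (hc : 0 < c) (hs : 0 < s) :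
    HasDerivAt (fun t => ent (c - t) s) (-(Real.log (c / s) + 1)) 0 := by
  have h0 := entDerivAdd hc hs
  have hneg : HasDerivAt (fun t : ℝ => -t) (-1) 0 := by
    exact hasDerivAt_neg (0 : ℝ)
  have h0' : HasDerivAt (fun t => ent (c + t) s) (Real.log (c / s) + 1) ((fun t : ℝ => -t) 0) := by
    simpa using h0
  have h5 := h0'.comp 0 hneg
  have heq : ((fun t => ent (c + t) s) ∘ Neg.neg) = fun t : ℝ => ent (c - t) s := by
    funext t; simp [Function.comp, sub_eq_add_neg]
  rw [heq] at h5
  exact h5.congr_deriv (by ring)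

/-- increase bound: `ent (c+t) s - ent c s ≤ t * log ((c+t)/s) + t` -/
lemma entA {c s t : ℝ} (hc : 0 ≤ c) (hs : 0 < s) (ht : 0 < t) :
    ent (c + t) s - ent c s ≤ t * Real.log ((c + t) / s) + t := by
  rcases hc.eq_or_lt with h | h
  · rw [← h]
    simp [ent]
    nlinarith [Real.log_le_sub_one_of_pos (show (0:ℝ) < t/s / (t/s) by positivity)]
  · have hkey : c * Real.log ((c + t) / c) ≤ t := by
      have hlog : Real.log ((c + t) / c) ≤ (c + t) / c - 1 :=
        Real.log_le_sub_one_of_pos (by positivity)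
      have : (c + t) / c - 1 = t / c := by field_simp; ring
      rw [this] at hlog
      have := mul_le_mul_of_nonneg_left hlog h.le
      rwa [mul_div_cancel₀ _ h.ne'] at this
    have hsplit : ent (c + t) s - ent c s
        = t * Real.log ((c + t) / s) + c * Real.log ((c + t) / c) := by
      simp only [ent]
      have e1 : Real.log ((c + t) / s) = Real.log (c + t) - Real.log s :=
        Real.log_div (by positivity) hs.ne'
      have e2 : Real.log (c / s) = Real.log c - Real.log s :=
        Real.log_div h.ne' hs.ne'
      have e3 : Real.log ((c + t) / c) = Real.log (c + t) - Real.log c :=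
        Real.log_div (by positivity) h.ne'
      rw [e1, e2, e3]
      ring
    linarith

/-- decrease bound: `ent (d-t) s - ent d s ≤ -(t * (1 + log ((d-t)/s)))` -/
lemma entB {d s t : ℝ} (hs : 0 < s) (ht : 0 < t) (htd : t < d) :
    ent (d - t) s - ent d s ≤ -(t * (1 + Real.log ((d - t) / s))) := by
  set y := d - t with hy
  have hy0 : 0 < y := by simp only [hy]; linarith
  -- ent (y + t) s - ent y s ≥ t * (1 + log (y / s))
  have hkey : t * (1 + Real.log (y / s)) ≤ ent (y + t) s - ent y s := by
    have hlog : Real.log (y / (y + t)) ≤ y / (y + t) - 1 :=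
      Real.log_le_sub_one_of_pos (by positivity)
    have hrw : Real.log (y / (y + t)) = Real.log y - Real.log (y + t) :=
      Real.log_div hy0.ne' (by positivity)
    -- (y+t) * (log(y+t) - log y) ≥ t
    have h5 : t ≤ (y + t) * (Real.log (y + t) - Real.log y) := by
      have h6 : y / (y + t) - 1 = -(t / (y + t)) := by field_simp; ring
      rw [hrw, h6] at hlog
      have h7 := mul_le_mul_of_nonneg_left (neg_le_neg hlog) (by positivity : (0:ℝ) ≤ y + t)
      have h8 : (y + t) * (t / (y + t)) = t := by field_simp
      nlinarith
    have e1 : Real.log ((y + t) / s) = Real.log (y + t) - Real.log s :=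
      Real.log_div (by positivity) hs.ne'
    have e2 : Real.log (y / s) = Real.log y - Real.log s :=
      Real.log_div hy0.ne' hs.ne'
    simp only [ent, e1, e2]
    nlinarith
  have hyd : y + t = d := by simp only [hy]; ring
  rw [hyd] at hkey
  linarith


/-- weighted marginal sum identity -/
lemma weight_sum {n m : ℕ} {a : Fin n → ℝ} {b : Fin m → ℝ} {P : Fin n → Fin m → ℝ}
    (h : IsCoupling a b P) (p : Fin n → ℝ) (q : Fin m → ℝ) :
    ∑ i, ∑ j, P i j * (p i + q j) = ∑ i, a i * p i + ∑ j, b j * q j := by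
  have h1 : ∑ i, ∑ j, P i j * p i = ∑ i, a i * p i := by
    refine Finset.sum_congr rfl fun i _ => ?_
    rw [← Finset.sum_mul, h.2.1 i]
  have h2 : ∑ i, ∑ j, P i j * q j = ∑ j, b j * q j := by
    rw [Finset.sum_comm]
    refine Finset.sum_congr rfl fun j _ => ?_
    rw [← Finset.sum_mul, h.2.2 j]
  calc ∑ i, ∑ j, P i j * (p i + q j)
      = ∑ i, ∑ j, (P i j * p i + P i j * q j) := by
        refine Finset.sum_congr rfl fun i _ => Finset.sum_congr rfl fun j _ => by ring
    _ = ∑ i, ∑ j, P i j * p i + ∑ i, ∑ j, P i j * q j := by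
        simp [Finset.sum_add_distrib]
    _ = _ := by rw [h1, h2]

lemma comparison {n m : ℕ} {a : Fin n → ℝ} {b : Fin m → ℝ} {S : Fin n → Fin m → ℝ}
    (hS : ∀ i j, 0 < S i j) {p : Fin n → ℝ} {q : Fin m → ℝ}
    (hR : IsCoupling a b (fun i j => S i j * Real.exp (p i + q j)))
    {P : Fin n → Fin m → ℝ} (hP : IsCoupling a b P)
    (hne : P ≠ fun i j => S i j * Real.exp (p i + q j)) :
    dEnt (fun i j => S i j * Real.exp (p i + q j)) S < dEnt P S := by
  set R : Fin n → Fin m → ℝ := fun i j => S i j * Real.exp (p i + q j) with hRdef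
  have hRpos : ∀ i j, 0 < R i j := fun i j => mul_pos (hS i j) (Real.exp_pos _)
  -- dEnt R S = ∑∑ R (p+q)
  have hER : dEnt R S = ∑ i, ∑ j, R i j * (p i + q j) := by
    refine Finset.sum_congr rfl fun i _ => Finset.sum_congr rfl fun j _ => ?_
    have : R i j / S i j = Real.exp (p i + q j) := by
      simp only [hRdef]
      exact mul_div_cancel_left₀ _ (hS i j).ne'
    rw [this, Real.log_exp]
  -- dEnt P S = ∑∑ P log(P/R) + ∑∑ P (p+q)
  have hEP : dEnt P S = (∑ i, ∑ j, P i j * Real.log (P i j / R i j))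
      + ∑ i, ∑ j, P i j * (p i + q j) := by
    rw [dEnt, ← Finset.sum_add_distrib]
    refine Finset.sum_congr rfl fun i _ => ?_
    rw [← Finset.sum_add_distrib]
    refine Finset.sum_congr rfl fun j _ => ?_
    rcases (hP.1 i j).eq_or_lt with h0 | h0
    · rw [← h0]; simp
    · have hsne : S i j ≠ 0 := (hS i j).ne'
      have hrne : R i j ≠ 0 := (hRpos i j).ne'
      have hfrac : P i j / S i j = (P i j / R i j) * (R i j / S i j) := by
        field_simp
      rw [hfrac, Real.log_mul (div_pos h0 (hRpos i j)).ne' (div_pos (hRpos i j) (hS i j)).ne']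
      have : R i j / S i j = Real.exp (p i + q j) := by
        simp only [hRdef]
        exact mul_div_cancel_left₀ _ (hS i j).ne'
      rw [this, Real.log_exp]
      ring
  have hw1 := weight_sum hP p q
  have hw2 := weight_sum hR p q
  have hsum : ∑ i, ∑ j, P i j = ∑ i, ∑ j, R i j := by
    have e1 : ∀ i, ∑ j, P i j = a i := hP.2.1
    have e2 : ∀ i, ∑ j, R i j = a i := hR.2.1
    simp [e1, e2]
  have hg := gibbs_pos hP.1 hRpos hsum hne
  linarith [hg, hEP, hER, hw1, hw2]

end DSS
open DSS

/-- the discrete Schrödinger system admits a solution `(p,q)`, unique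
up to the shift `(p,q) ↦ (p + r𝟏, q - r𝟏)`, and `π* = (σ_{ij} exp(p_i+q_j))` is the
unique minimizer of `H(·|σ)` over couplings of `μ` and `ν`. -/
theorem discrete_schrodinger_system {n m : ℕ} (hn : 0 < n) (hm : 0 < m)
    (a : Fin n → ℝ) (b : Fin m → ℝ) (σ : Fin n → Fin m → ℝ)
    (ha : ∀ i, 0 < a i) (hb : ∀ j, 0 < b j) (hσ : ∀ i j, 0 < σ i j)
    (hsa : ∑ i, a i = 1) (hsb : ∑ j, b j = 1) :
    ∃ p : Fin n → ℝ, ∃ q : Fin m → ℝ,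
      (∀ i, a i = ∑ j, σ i j * Real.exp (p i + q j)) ∧
      (∀ j, b j = ∑ i, σ i j * Real.exp (p i + q j)) ∧
      (∀ p' : Fin n → ℝ, ∀ q' : Fin m → ℝ,
        (∀ i, a i = ∑ j, σ i j * Real.exp (p' i + q' j)) →
        (∀ j, b j = ∑ i, σ i j * Real.exp (p' i + q' j)) →
        ∃ r : ℝ, (∀ i, p' i = p i + r) ∧ (∀ j, q' j = q j - r)) ∧
      IsCoupling a b (fun i j => σ i j * Real.exp (p i + q j)) ∧
      (∀ π : Fin n → Fin m → ℝ, IsCoupling a b π →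
        π ≠ (fun i j => σ i j * Real.exp (p i + q j)) →
        dEnt (fun i j => σ i j * Real.exp (p i + q j)) σ < dEnt π σ) := by
  classical
  -- existence of a minimizer of dEnt over the coupling polytope
  have hKne : Set.Nonempty {P : Fin n → Fin m → ℝ | IsCoupling a b P} := by
    refine ⟨fun i j => a i * b j, fun i j => (mul_pos (ha i) (hb j)).le, ?_, ?_⟩
    · intro i; rw [← Finset.mul_sum, hsb, mul_one]
    · intro j; rw [← Finset.sum_mul, hsa, one_mul]
  have hceval : ∀ (i : Fin n) (j : Fin m), Continuous fun P : Fin n → Fin m → ℝ => P i j :=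
    fun i j => (continuous_apply j).comp (continuous_apply i)
  have hKclosed : IsClosed {P : Fin n → Fin m → ℝ | IsCoupling a b P} := by
    have hrep : {P : Fin n → Fin m → ℝ | IsCoupling a b P} =
        (⋂ i, ⋂ j, {P : Fin n → Fin m → ℝ | 0 ≤ P i j}) ∩
        ((⋂ i, {P : Fin n → Fin m → ℝ | ∑ j, P i j = a i}) ∩
         (⋂ j, {P : Fin n → Fin m → ℝ | ∑ i, P i j = b j})) := by
      ext P
      simp only [Set.mem_setOf_eq, Set.mem_inter_iff, Set.mem_iInter, IsCoupling]
    rw [hrep]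
    refine IsClosed.inter (isClosed_iInter fun i => isClosed_iInter fun j =>
        isClosed_le continuous_const (hceval i j)) (IsClosed.inter ?_ ?_)
    · exact isClosed_iInter fun i =>
        isClosed_eq (continuous_finset_sum _ fun j _ => hceval i j) continuous_const
    · exact isClosed_iInter fun j =>
        isClosed_eq (continuous_finset_sum _ fun i _ => hceval i j) continuous_const
  have hsub : {P : Fin n → Fin m → ℝ | IsCoupling a b P} ⊆
      Set.pi Set.univ (fun _ : Fin n => Set.pi Set.univ fun _ : Fin m => Set.Icc (0:ℝ) 1) := by
    intro P hP
    simp only [Set.mem_pi, Set.mem_univ, forall_true_left, Set.mem_Icc]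
    intro i j
    refine ⟨hP.1 i j, ?_⟩
    have h1 : P i j ≤ ∑ j', P i j' :=
      Finset.single_le_sum (fun j' _ => hP.1 i j') (Finset.mem_univ j)
    have h2 : a i ≤ ∑ i', a i' :=
      Finset.single_le_sum (fun i' _ => (ha i').le) (Finset.mem_univ i)
    rw [hP.2.1 i] at h1; rw [hsa] at h2; linarith
  have hKcomp : IsCompact {P : Fin n → Fin m → ℝ | IsCoupling a b P} :=
    IsCompact.of_isClosed_subset
      (isCompact_univ_pi fun _ => isCompact_univ_pi fun _ => isCompact_Icc) hKclosed hsub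
  have hent_cont : ∀ s : ℝ, s ≠ 0 → Continuous fun x : ℝ => x * Real.log (x / s) := by
    intro s hs
    have heq : (fun x : ℝ => x * Real.log (x / s)) = fun x => x * Real.log x - x * Real.log s := by
      funext x
      rcases eq_or_ne x 0 with rfl | hx
      · simp
      · rw [Real.log_div hx hs]; ring
    rw [heq]
    exact Real.continuous_mul_log.sub (continuous_id.mul continuous_const)
  have hdcont : Continuous fun P : Fin n → Fin m → ℝ => dEnt P σ := by
    simp only [dEnt]
    refine continuous_finset_sum _ fun i _ => continuous_finset_sum _ fun j _ => ?_
    exact (hent_cont (σ i j) (hσ i j).ne').comp (hceval i j)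
  obtain ⟨P0, hP0K, hmin⟩ := hKcomp.exists_isMinOn hKne hdcont.continuousOn
  have hP0 : IsCoupling a b P0 := hP0K
  have hminle : ∀ Q, IsCoupling a b Q → dEnt P0 σ ≤ dEnt Q σ := fun Q hQ => hmin hQ
  -- positivity of the minimizer
  have hpos : ∀ i j, 0 < P0 i j := by
    intro i j
    rcases (hP0.1 i j).lt_or_eq with h | h
    · exact h
    have hij0 : P0 i j = 0 := h.symm
    exfalso
    obtain ⟨j', hj'⟩ : ∃ j', 0 < P0 i j' := by
      by_contra hcon; push_neg at hcon
      have : ∑ v, P0 i v ≤ 0 := Finset.sum_nonpos fun v _ => hcon v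
      rw [hP0.2.1 i] at this; linarith [ha i]
    obtain ⟨i', hi'⟩ : ∃ i', 0 < P0 i' j := by
      by_contra hcon; push_neg at hcon
      have : ∑ u, P0 u j ≤ 0 := Finset.sum_nonpos fun u _ => hcon u
      rw [hP0.2.2 j] at this; linarith [hb j]
    have hjj' : j ≠ j' := by rintro rfl; rw [hij0] at hj'; exact lt_irrefl _ hj'
    have hii' : i ≠ i' := by rintro rfl; rw [hij0] at hi'; exact lt_irrefl _ hi'
    obtain ⟨C, hCdef⟩ : ∃ C : ℝ, C = (Real.log ((P0 i' j' + 1) / σ i' j') + 1)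
      + (Real.log (σ i j') - Real.log (P0 i j' / 2) - 1)
      + (Real.log (σ i' j) - Real.log (P0 i' j / 2) - 1) - Real.log (σ i j) := ⟨_, rfl⟩
    obtain ⟨t, htdef⟩ : ∃ t : ℝ,
        t = min (min 1 (Real.exp (-C - 1))) (min (P0 i j' / 2) (P0 i' j / 2)) := ⟨_, rfl⟩
    have ht0 : 0 < t := by
      rw [htdef]
      exact lt_min (lt_min one_pos (Real.exp_pos _)) (lt_min (by linarith) (by linarith))
    have ht1 : t ≤ 1 := htdef ▸ le_trans (min_le_left _ _) (min_le_left _ _)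
    have htC : t ≤ Real.exp (-C - 1) := htdef ▸ le_trans (min_le_left _ _) (min_le_right _ _)
    have htd : t ≤ P0 i j' / 2 := htdef ▸ le_trans (min_le_right _ _) (min_le_left _ _)
    have hte : t ≤ P0 i' j / 2 := htdef ▸ le_trans (min_le_right _ _) (min_le_right _ _)
    have htd' : t < P0 i j' := by linarith
    have hte' : t < P0 i' j := by linarith
    have hcpl := pert_coupling (t := t) hP0 hii' hjj' (by rw [hij0]; linarith)
      (by linarith [hP0.1 i' j']) (by linarith) (by linarith)
    have hterm1 : ent (P0 i j + t) (σ i j) - ent (P0 i j) (σ i j)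
        = t * Real.log t - t * Real.log (σ i j) := by
      rw [hij0]
      simp only [ent, zero_add, zero_mul, sub_zero, zero_div]
      rw [Real.log_div ht0.ne' (hσ i j).ne']
      ring
    have hterm2 : ent (P0 i' j' + t) (σ i' j') - ent (P0 i' j') (σ i' j')
        ≤ t * (Real.log ((P0 i' j' + 1) / σ i' j') + 1) := by
      have h1 := entA (hP0.1 i' j') (hσ i' j') ht0
      have h2 : Real.log ((P0 i' j' + t) / σ i' j') ≤ Real.log ((P0 i' j' + 1) / σ i' j') := by
        apply Real.log_le_log (div_pos (by linarith [hP0.1 i' j']) (hσ i' j'))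
        gcongr <;> linarith [hσ i' j', hP0.1 i' j']
      nlinarith [mul_le_mul_of_nonneg_left h2 ht0.le]
    have hterm3 : ent (P0 i j' - t) (σ i j') - ent (P0 i j') (σ i j')
        ≤ t * (Real.log (σ i j') - Real.log (P0 i j' / 2) - 1) := by
      have h1 := entB (hσ i j') ht0 htd'
      have h2 : Real.log (P0 i j' / 2) ≤ Real.log (P0 i j' - t) :=
        Real.log_le_log (by linarith) (by linarith)
      have h3 : Real.log ((P0 i j' - t) / σ i j') = Real.log (P0 i j' - t) - Real.log (σ i j') :=
        Real.log_div (by linarith) (hσ i j').ne'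
      nlinarith [mul_le_mul_of_nonneg_left h2 ht0.le]
    have hterm4 : ent (P0 i' j - t) (σ i' j) - ent (P0 i' j) (σ i' j)
        ≤ t * (Real.log (σ i' j) - Real.log (P0 i' j / 2) - 1) := by
      have h1 := entB (hσ i' j) ht0 hte'
      have h2 : Real.log (P0 i' j / 2) ≤ Real.log (P0 i' j - t) :=
        Real.log_le_log (by linarith) (by linarith)
      have h3 : Real.log ((P0 i' j - t) / σ i' j) = Real.log (P0 i' j - t) - Real.log (σ i' j) :=
        Real.log_div (by linarith) (hσ i' j).ne'
      nlinarith [mul_le_mul_of_nonneg_left h2 ht0.le]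
    have hEbound : dEnt (pert P0 i i' j j' t) σ ≤ dEnt P0 σ + t * (Real.log t + C) := by
      rw [dEnt_pert P0 σ t hii' hjj']
      have hCexp : t * (Real.log t + C) = (t * Real.log t - t * Real.log (σ i j))
          + t * (Real.log ((P0 i' j' + 1) / σ i' j') + 1)
          + t * (Real.log (σ i j') - Real.log (P0 i j' / 2) - 1)
          + t * (Real.log (σ i' j) - Real.log (P0 i' j / 2) - 1) := by
        rw [hCdef]; ring
      linarith [hterm1, hterm2, hterm3, hterm4]
    have hlogt : Real.log t ≤ -C - 1 := by
      have := Real.log_le_log ht0 htC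
      rwa [Real.log_exp] at this
    have hneg : t * (Real.log t + C) ≤ t * (-1) := by
      apply mul_le_mul_of_nonneg_left (by linarith) ht0.le
    have hlt : dEnt (pert P0 i i' j j' t) σ < dEnt P0 σ := by linarith
    exact absurd (hminle _ hcpl) (not_le.mpr hlt)
  -- stationarity: exchange identity for the log-ratios
  have hstat : ∀ (i i' : Fin n) (j j' : Fin m),
      Real.log (P0 i j / σ i j) + Real.log (P0 i' j' / σ i' j')
        = Real.log (P0 i j' / σ i j') + Real.log (P0 i' j / σ i' j) := by
    intro i i' j j'
    rcases eq_or_ne i i' with rfl | hii'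
    · ring
    rcases eq_or_ne j j' with rfl | hjj'
    · ring
    obtain ⟨δ, hδdef⟩ : ∃ δ : ℝ,
        δ = min (min (P0 i j) (P0 i' j')) (min (P0 i j') (P0 i' j)) := ⟨_, rfl⟩
    have hδ0 : 0 < δ := by
      rw [hδdef]
      exact lt_min (lt_min (hpos i j) (hpos i' j')) (lt_min (hpos i j') (hpos i' j))
    have hδ1 : δ ≤ P0 i j := hδdef ▸ le_trans (min_le_left _ _) (min_le_left _ _)
    have hδ2 : δ ≤ P0 i' j' := hδdef ▸ le_trans (min_le_left _ _) (min_le_right _ _)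
    have hδ3 : δ ≤ P0 i j' := hδdef ▸ le_trans (min_le_right _ _) (min_le_left _ _)
    have hδ4 : δ ≤ P0 i' j := hδdef ▸ le_trans (min_le_right _ _) (min_le_right _ _)
    have hloc : IsLocalMin (fun t => dEnt (pert P0 i i' j j' t) σ) 0 := by
      have hmem : Set.Ioo (-δ) δ ∈ nhds (0:ℝ) := Ioo_mem_nhds (by linarith) hδ0
      have hev : ∀ᶠ t in nhds (0:ℝ),
          (fun t => dEnt (pert P0 i i' j j' t) σ) 0 ≤ (fun t => dEnt (pert P0 i i' j j' t) σ) t := by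
        filter_upwards [hmem] with t ht
        have hcpl := pert_coupling (t := t) hP0 hii' hjj'
          (by linarith [ht.1]) (by linarith [ht.1]) (by linarith [ht.2]) (by linarith [ht.2])
        have := hminle _ hcpl
        simpa [pert_zero] using this
      exact hev
    have hder : HasDerivAt (fun t => dEnt (pert P0 i i' j j' t) σ)
        ((Real.log (P0 i j / σ i j) + 1) + (Real.log (P0 i' j' / σ i' j') + 1)
          + (-(Real.log (P0 i j' / σ i j') + 1) + -(Real.log (P0 i' j / σ i' j) + 1))) 0 := by
      have hfun : (fun t => dEnt (pert P0 i i' j j' t) σ)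
          = fun t => (dEnt P0 σ - ent (P0 i j) (σ i j) - ent (P0 i' j') (σ i' j')
              - ent (P0 i j') (σ i j') - ent (P0 i' j) (σ i' j))
            + ((ent (P0 i j + t) (σ i j) + ent (P0 i' j' + t) (σ i' j'))
              + (ent (P0 i j' - t) (σ i j') + ent (P0 i' j - t) (σ i' j))) := by
        funext t
        rw [dEnt_pert P0 σ t hii' hjj']
        ring
      rw [hfun]
      have h1 := entDerivAdd (hpos i j) (hσ i j)
      have h2 := entDerivAdd (hpos i' j') (hσ i' j')
      have h3 := entDerivSub (hpos i j') (hσ i j')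
      have h4 := entDerivSub (hpos i' j) (hσ i' j)
      exact ((h1.add h2).add (h3.add h4)).const_add _
    have hzero := hloc.hasDerivAt_eq_zero hder
    linarith [hzero]
  -- construct the potentials from the minimizer
  have hexp : ∀ i j, Real.exp (Real.log (P0 i j / σ i j)) = P0 i j / σ i j :=
    fun i j => Real.exp_log (div_pos (hpos i j) (hσ i j))
  obtain ⟨i0⟩ : Nonempty (Fin n) := ⟨⟨0, hn⟩⟩
  obtain ⟨j0⟩ : Nonempty (Fin m) := ⟨⟨0, hm⟩⟩
  obtain ⟨p, hpdef⟩ : ∃ p : Fin n → ℝ,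
      p = fun i => Real.log (P0 i j0 / σ i j0) - Real.log (P0 i0 j0 / σ i0 j0) := ⟨_, rfl⟩
  obtain ⟨q, hqdef⟩ : ∃ q : Fin m → ℝ, q = fun j => Real.log (P0 i0 j / σ i0 j) := ⟨_, rfl⟩
  have hPform : ∀ i j, σ i j * Real.exp (p i + q j) = P0 i j := by
    intro i j
    have hexch := hstat i i0 j j0
    have hpq : p i + q j = Real.log (P0 i j / σ i j) := by
      rw [hpdef, hqdef]; dsimp only; linarith
    rw [hpq, hexp i j, mul_div_cancel₀ _ (hσ i j).ne']
  have hfun : (fun i j => σ i j * Real.exp (p i + q j)) = P0 := by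
    funext i j; exact hPform i j
  have hcplρ : IsCoupling a b (fun i j => σ i j * Real.exp (p i + q j)) := by
    rw [hfun]; exact hP0
  refine ⟨p, q, ?_, ?_, ?_, hcplρ, ?_⟩
  · intro i
    rw [show (∑ j, σ i j * Real.exp (p i + q j)) = ∑ j, P0 i j from
      Finset.sum_congr rfl fun j _ => hPform i j, hP0.2.1 i]
  · intro j
    rw [show (∑ i, σ i j * Real.exp (p i + q j)) = ∑ i, P0 i j from
      Finset.sum_congr rfl fun i _ => hPform i j, hP0.2.2 j]
  · -- uniqueness up to shift
    intro p' q' h1' h2'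
    have hcplρ' : IsCoupling a b (fun i j => σ i j * Real.exp (p' i + q' j)) :=
      ⟨fun i j => (mul_pos (hσ i j) (Real.exp_pos _)).le,
        fun i => (h1' i).symm, fun j => (h2' j).symm⟩
    have heqρ : (fun i j => σ i j * Real.exp (p' i + q' j))
        = fun i j => σ i j * Real.exp (p i + q j) := by
      by_contra hne
      have c1 := comparison hσ hcplρ hcplρ' hne
      have c2 := comparison hσ hcplρ' hcplρ (Ne.symm hne)
      linarith
    have hpq : ∀ i j, p' i + q' j = p i + q j := by
      intro i j
      have hcomp := congrFun (congrFun heqρ i) j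
      have hexps := mul_left_cancel₀ (hσ i j).ne' hcomp
      exact Real.exp_eq_exp.mp hexps
    refine ⟨p' i0 - p i0, fun i => ?_, fun j => ?_⟩
    · have h1 := hpq i j0
      have h2 := hpq i0 j0
      linarith
    · have h1 := hpq i0 j
      linarith
  · intro P hP hne
    exact comparison hσ hcplρ hP hne


end
end

section
/- Let u ∈ ℝ^n, v ∈ ℝ^m, and suppose u' ∈ ℝ^n, v' ∈ ℝ^m satisfy u'_k = (1-1/λ)Σ_i p_{ki}u_i - (1/λ)Σ_j q_{kj}v_j and v'_l = -(1/λ)Σ_i r_{li}u_i + (1-1/λ)Σ_j s_{lj}v_j, where λ > 2 and the matrices P=(p_{ki}), Q=(q_{kj}), R=(r_{li}), S=(s_{lj}) are row-stochastic with all entries ≥ 1/η for some η > 2. Then, writing ‖(u,v)‖_{l∞_⊕} = max{max_i u_i + max_j v_j, -(min_i u_i + min_j v_j)} assumed nonnegative, one has ‖(u',v')‖_{l∞_⊕} ≤ (1 - 2/max{λ,η})‖(u,v)‖_{l∞_⊕}. -/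
noncomputable section

/-- The `l∞_⊕` quantity `max{max u + max v, -(min u + min v)}`. -/
def nInfOplus {n m : ℕ} (u : Fin n → ℝ) (v : Fin m → ℝ) : ℝ :=
  max ((⨆ i, u i) + (⨆ j, v j)) (-((⨅ i, u i) + (⨅ j, v j)))

lemma weighted_le {n : ℕ} (w u : Fin n → ℝ) (c M : ℝ) (hc : 0 ≤ c)
    (hw : ∀ i, c ≤ w i) (hs : ∑ i, w i = 1) (i0 : Fin n) (hM : ∀ i, u i ≤ M) :
    ∑ i, w i * u i ≤ c * u i0 + (1 - c) * M := by
  have hsum : ∑ i, w i * u i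
      = w i0 * u i0 + ∑ i ∈ Finset.univ.erase i0, w i * u i :=
    (Finset.add_sum_erase _ _ (Finset.mem_univ i0)).symm
  have hrest : ∑ i ∈ Finset.univ.erase i0, w i * u i
      ≤ ∑ i ∈ Finset.univ.erase i0, w i * M := by
    refine Finset.sum_le_sum fun i _ => ?_
    exact mul_le_mul_of_nonneg_left (hM i) (le_trans hc (hw i))
  have hrw : ∑ i ∈ Finset.univ.erase i0, w i = 1 - w i0 := by
    have h := Finset.add_sum_erase Finset.univ w (Finset.mem_univ i0)
    rw [hs] at h; linarith
  have hM' : ∑ i ∈ Finset.univ.erase i0, w i * M = (1 - w i0) * M := by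
    rw [← Finset.sum_mul, hrw]
  have key : (w i0 - c) * (M - u i0) ≥ 0 :=
    mul_nonneg (by linarith [hw i0]) (by linarith [hM i0])
  nlinarith [hsum, hrest, hM']

lemma weighted_ge {n : ℕ} (w u : Fin n → ℝ) (c M : ℝ) (hc : 0 ≤ c)
    (hw : ∀ i, c ≤ w i) (hs : ∑ i, w i = 1) (i0 : Fin n) (hM : ∀ i, M ≤ u i) :
    c * u i0 + (1 - c) * M ≤ ∑ i, w i * u i := by
  have h := weighted_le w (fun i => -u i) c (-M) hc hw hs i0
    (fun i => neg_le_neg (hM i))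
  simp only [mul_neg, Finset.sum_neg_distrib] at h
  linarith


lemma contract_arith (A B s t N : ℝ) (hA : 0 ≤ A) (hs : s ≤ N) (ht : -t ≤ N)
    (hts : t ≤ s) : A * s + B * t ≤ (A + |B|) * N := by
  rcases abs_cases B with ⟨h1, h2⟩ | ⟨h1, h2⟩
  · have e1 := mul_le_mul_of_nonneg_left hs hA
    have e2 := mul_le_mul_of_nonneg_left (show t ≤ N by linarith) h2
    rw [h1]; nlinarith [e1, e2]
  · have e1 := mul_le_mul_of_nonneg_left hs hA
    have e2 : 0 ≤ (-B) * (t + N) := mul_nonneg (by linarith) (by linarith)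
    rw [h1]; nlinarith [e1, e2]

/-- the Sinkhorn-type linear update with row-stochastic matrices with
entries `≥ 1/η` contracts the `l∞_⊕` quantity by the factor `1 - 2/max{λ,η}`. -/
theorem sinkhorn_contraction_estimate {n m : ℕ} (hn : 0 < n) (hm : 0 < m)
    (u u' : Fin n → ℝ) (v v' : Fin m → ℝ)
    (lam η : ℝ) (hlam : 2 < lam) (hη : 2 < η)
    (P : Fin n → Fin n → ℝ) (Q : Fin n → Fin m → ℝ)
    (R : Fin m → Fin n → ℝ) (S : Fin m → Fin m → ℝ)
    (hP : (∀ k i, 1 / η ≤ P k i) ∧ ∀ k, ∑ i, P k i = 1)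
    (hQ : (∀ k j, 1 / η ≤ Q k j) ∧ ∀ k, ∑ j, Q k j = 1)
    (hR : (∀ l i, 1 / η ≤ R l i) ∧ ∀ l, ∑ i, R l i = 1)
    (hS : (∀ l j, 1 / η ≤ S l j) ∧ ∀ l, ∑ j, S l j = 1)
    (hu' : ∀ k, u' k = (1 - 1 / lam) * ∑ i, P k i * u i - (1 / lam) * ∑ j, Q k j * v j)
    (hv' : ∀ l, v' l = -(1 / lam) * ∑ i, R l i * u i + (1 - 1 / lam) * ∑ j, S l j * v j)
    (hnn : 0 ≤ nInfOplus u v) :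
    nInfOplus u' v' ≤ (1 - 2 / max lam η) * nInfOplus u v := by
  haveI : Nonempty (Fin n) := ⟨⟨0, hn⟩⟩
  haveI : Nonempty (Fin m) := ⟨⟨0, hm⟩⟩
  have hlam0 : (0:ℝ) < lam := by linarith
  have hη0 : (0:ℝ) < η := by linarith
  set p := 1 / lam with hp_def
  set q := 1 / η with hq_def
  have hp0 : 0 < p := by rw [hp_def]; positivity
  have hq0 : 0 < q := by rw [hq_def]; positivity
  have hp2 : p < 1/2 := by
    rw [hp_def]; exact one_div_lt_one_div_of_lt (by norm_num) hlam
  have hq2 : q < 1/2 := by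
    rw [hq_def]; exact one_div_lt_one_div_of_lt (by norm_num) hη
  obtain ⟨ia, hia⟩ := Finite.exists_max u
  obtain ⟨ib, hib⟩ := Finite.exists_min u
  obtain ⟨ja, hja⟩ := Finite.exists_max v
  obtain ⟨jb, hjb⟩ := Finite.exists_min v
  set a := u ia
  set b := u ib
  set c := v ja
  set d := v jb
  have hUu : (⨆ i, u i) = a :=
    le_antisymm (ciSup_le hia) (le_ciSup (Set.finite_range u).bddAbove ia)
  have hLu : (⨅ i, u i) = b :=
    le_antisymm (ciInf_le (Set.finite_range u).bddBelow ib) (le_ciInf hib)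
  have hUv : (⨆ j, v j) = c :=
    le_antisymm (ciSup_le hja) (le_ciSup (Set.finite_range v).bddAbove ja)
  have hLv : (⨅ j, v j) = d :=
    le_antisymm (ciInf_le (Set.finite_range v).bddBelow jb) (le_ciInf hjb)
  have hN : nInfOplus u v = max (a + c) (-(b + d)) := by
    rw [nInfOplus, hUu, hUv, hLu, hLv]
  set N := max (a + c) (-(b + d)) with hNdef
  have hN1 : a + c ≤ N := le_max_left _ _
  have hN2 : -(b + d) ≤ N := le_max_right _ _
  have hba : b ≤ a := hib ia
  have hdc : d ≤ c := hjb ja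
  -- weighted sum bounds
  have hPub : ∀ k, ∑ i, P k i * u i ≤ q * b + (1 - q) * a :=
    fun k => weighted_le _ _ _ _ hq0.le (hP.1 k) (hP.2 k) ib hia
  have hPlb : ∀ k, q * a + (1 - q) * b ≤ ∑ i, P k i * u i :=
    fun k => weighted_ge _ _ _ _ hq0.le (hP.1 k) (hP.2 k) ia hib
  have hQub : ∀ k, ∑ j, Q k j * v j ≤ q * d + (1 - q) * c :=
    fun k => weighted_le _ _ _ _ hq0.le (hQ.1 k) (hQ.2 k) jb hja
  have hQlb : ∀ k, q * c + (1 - q) * d ≤ ∑ j, Q k j * v j :=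
    fun k => weighted_ge _ _ _ _ hq0.le (hQ.1 k) (hQ.2 k) ja hjb
  have hRub : ∀ l, ∑ i, R l i * u i ≤ q * b + (1 - q) * a :=
    fun l => weighted_le _ _ _ _ hq0.le (hR.1 l) (hR.2 l) ib hia
  have hRlb : ∀ l, q * a + (1 - q) * b ≤ ∑ i, R l i * u i :=
    fun l => weighted_ge _ _ _ _ hq0.le (hR.1 l) (hR.2 l) ia hib
  have hSub : ∀ l, ∑ j, S l j * v j ≤ q * d + (1 - q) * c :=
    fun l => weighted_le _ _ _ _ hq0.le (hS.1 l) (hS.2 l) jb hja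
  have hSlb : ∀ l, q * c + (1 - q) * d ≤ ∑ j, S l j * v j :=
    fun l => weighted_ge _ _ _ _ hq0.le (hS.1 l) (hS.2 l) ja hjb
  set X := (1 - p) * (q * b + (1 - q) * a) - p * (q * c + (1 - q) * d) with hX
  set Y := -p * (q * a + (1 - q) * b) + (1 - p) * (q * d + (1 - q) * c) with hY
  set X' := (1 - p) * (q * a + (1 - q) * b) - p * (q * d + (1 - q) * c) with hX'
  set Y' := -p * (q * b + (1 - q) * a) + (1 - p) * (q * c + (1 - q) * d) with hY'
  have hu'ub : ∀ k, u' k ≤ X := by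
    intro k
    rw [hu' k]
    have e1 : (1 - p) * (∑ i, P k i * u i) ≤ (1 - p) * (q * b + (1 - q) * a) :=
      mul_le_mul_of_nonneg_left (hPub k) (by linarith)
    have e2 : p * (q * c + (1 - q) * d) ≤ p * (∑ j, Q k j * v j) :=
      mul_le_mul_of_nonneg_left (hQlb k) hp0.le
    rw [hX]; linarith
  have hu'lb : ∀ k, X' ≤ u' k := by
    intro k
    rw [hu' k]
    have e1 : (1 - p) * (q * a + (1 - q) * b) ≤ (1 - p) * (∑ i, P k i * u i) :=
      mul_le_mul_of_nonneg_left (hPlb k) (by linarith)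
    have e2 : p * (∑ j, Q k j * v j) ≤ p * (q * d + (1 - q) * c) :=
      mul_le_mul_of_nonneg_left (hQub k) hp0.le
    rw [hX']; linarith
  have hv'ub : ∀ l, v' l ≤ Y := by
    intro l
    rw [hv' l]
    have e1 : p * (q * a + (1 - q) * b) ≤ p * (∑ i, R l i * u i) :=
      mul_le_mul_of_nonneg_left (hRlb l) hp0.le
    have e2 : (1 - p) * (∑ j, S l j * v j) ≤ (1 - p) * (q * d + (1 - q) * c) :=
      mul_le_mul_of_nonneg_left (hSub l) (by linarith)
    rw [hY]; linarith
  have hv'lb : ∀ l, Y' ≤ v' l := by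
    intro l
    rw [hv' l]
    have e1 : p * (∑ i, R l i * u i) ≤ p * (q * b + (1 - q) * a) :=
      mul_le_mul_of_nonneg_left (hRub l) hp0.le
    have e2 : (1 - p) * (q * c + (1 - q) * d) ≤ (1 - p) * (∑ j, S l j * v j) :=
      mul_le_mul_of_nonneg_left (hSlb l) (by linarith)
    rw [hY']; linarith
  have hsupu : (⨆ k, u' k) ≤ X := ciSup_le hu'ub
  have hsupv : (⨆ l, v' l) ≤ Y := ciSup_le hv'ub
  have hinfu : X' ≤ (⨅ k, u' k) := le_ciInf hu'lb
  have hinfv : Y' ≤ (⨅ l, v' l) := le_ciInf hv'lb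
  rw [hN]
  rw [nInfOplus]
  have hA : 0 ≤ 1 - p - q := by linarith
  have key1 : X + Y ≤ (1 - 2 / max lam η) * N := by
    have hca : X + Y = (1 - p - q) * (a + c) + (q - p) * (b + d) := by
      rw [hX, hY]; ring
    have base := contract_arith (1 - p - q) (q - p) (a + c) (b + d) N hA hN1 hN2
      (by linarith)
    rcases le_total lam η with h | h
    · rw [max_eq_right h]
      have hpq : q ≤ p := by
        rw [hp_def, hq_def]; exact one_div_le_one_div_of_le hlam0 h
      have h2q : (2:ℝ) / η = 2 * q := by rw [hq_def]; ring
      have habs : |q - p| = p - q := (abs_of_nonpos (by linarith)).trans (by ring)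
      rw [h2q]
      rw [hca]
      calc (1 - p - q) * (a + c) + (q - p) * (b + d)
          ≤ ((1 - p - q) + |q - p|) * N := base
        _ = (1 - 2 * q) * N := by rw [habs]; ring
    · rw [max_eq_left h]
      have hpq : p ≤ q := by
        rw [hp_def, hq_def]; exact one_div_le_one_div_of_le hη0 h
      have h2p : (2:ℝ) / lam = 2 * p := by rw [hp_def]; ring
      have habs : |q - p| = q - p := abs_of_nonneg (by linarith)
      rw [h2p]
      rw [hca]
      calc (1 - p - q) * (a + c) + (q - p) * (b + d)
          ≤ ((1 - p - q) + |q - p|) * N := base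
        _ = (1 - 2 * p) * N := by rw [habs]; ring
  have key2 : -(X' + Y') ≤ (1 - 2 / max lam η) * N := by
    have hca : -(X' + Y') = (1 - p - q) * (-(b + d)) + (q - p) * (-(a + c)) := by
      rw [hX', hY']; ring
    have base := contract_arith (1 - p - q) (q - p) (-(b + d)) (-(a + c)) N hA hN2
      (by linarith) (by linarith)
    rcases le_total lam η with h | h
    · rw [max_eq_right h]
      have hpq : q ≤ p := by
        rw [hp_def, hq_def]; exact one_div_le_one_div_of_le hlam0 h
      have h2q : (2:ℝ) / η = 2 * q := by rw [hq_def]; ring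
      have habs : |q - p| = p - q := (abs_of_nonpos (by linarith)).trans (by ring)
      rw [h2q]
      rw [hca]
      calc (1 - p - q) * (-(b + d)) + (q - p) * (-(a + c))
          ≤ ((1 - p - q) + |q - p|) * N := base
        _ = (1 - 2 * q) * N := by rw [habs]; ring
    · rw [max_eq_left h]
      have hpq : p ≤ q := by
        rw [hp_def, hq_def]; exact one_div_le_one_div_of_le hη0 h
      have h2p : (2:ℝ) / lam = 2 * p := by rw [hp_def]; ring
      have habs : |q - p| = q - p := abs_of_nonneg (by linarith)
      rw [h2p]
      rw [hca]
      calc (1 - p - q) * (-(b + d)) + (q - p) * (-(a + c))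
          ≤ ((1 - p - q) + |q - p|) * N := base
        _ = (1 - 2 * p) * N := by rw [habs]; ring
  apply max_le
  · calc (⨆ k, u' k) + (⨆ l, v' l) ≤ X + Y := add_le_add hsupu hsupv
      _ ≤ _ := key1
  · calc -((⨅ k, u' k) + (⨅ l, v' l)) ≤ -(X' + Y') := by linarith
      _ ≤ _ := key2

end
end
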